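/- Assume v₀ ≤ 0, u₀ < 0 and (1 − v₀)² + u₀ > (E_μ[θ] − v₀)², and let (ã*, p̃*) be the valuable optimal veto mechanism of the characterization (pooling at ā below the threshold θ̄ with no veto, and proposing η(θ) with veto probability (η(θ) − ā)/(η(θ) − v₀) above θ̄, where ā solves ∫_{θ̄}¹ (η(θ) − ā) dμ(θ) + ā − E_μ[θ] = 0 and η(θ̄) = ā). Then its principal payoff ∫₀¹ (p̃*(θ)·u₀ − (1 − p̃*(θ))·(ã*(θ) − θ)²) dμ(θ) is strictly greater than −∫₀¹ (E_μ[θ] − θ)² dμ(θ), the principal payoff of the constant mechanism that chooses E_μ[θ] at every state without veto; that is, the optimal veto mechanism is valuable. -/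

import Mathlib

open MeasureTheory Set

/-- Principal's ex ante payoff from a veto mechanism `(p, a)`:
`∫ (p θ · u₀ − (1 − p θ) · (a θ − θ)²) dμ(θ)`. -/
noncomputable def vetoPayoff (μ : Measure ℝ) (u₀ : ℝ) (p a : ℝ → ℝ) : ℝ :=
  ∫ θ, (p θ * u₀ - (1 - p θ) * (a θ - θ) ^ 2) ∂μ

/-- A veto mechanism: a measurable veto probability `p : [0,1] → [0,1]` and a measurable
proposed action `a : [0,1] → [−M, M]`. -/
def IsVetoMechanism (M : ℝ) (p a : ℝ → ℝ) : Prop :=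
  Measurable p ∧ Measurable a ∧
    (∀ θ ∈ Set.Icc (0 : ℝ) 1, p θ ∈ Set.Icc (0 : ℝ) 1) ∧
    (∀ θ ∈ Set.Icc (0 : ℝ) 1, a θ ∈ Set.Icc (-M) M)

/-- Incentive compatibility of a veto mechanism: the agent's expected payoff
`p θ · v₀ + (1 − p θ) · a θ` is constant in the state. -/
def IsICVeto (v₀ : ℝ) (p a : ℝ → ℝ) : Prop :=
  ∃ vhat : ℝ, ∀ θ ∈ Set.Icc (0 : ℝ) 1, p θ * v₀ + (1 - p θ) * a θ = vhat

/-- An optimal veto mechanism: incentive compatible and weakly dominating every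
incentive-compatible veto mechanism in principal payoff. -/
def IsOptimalVeto (μ : Measure ℝ) (v₀ u₀ M : ℝ) (p a : ℝ → ℝ) : Prop :=
  IsVetoMechanism M p a ∧ IsICVeto v₀ p a ∧
    ∀ q b : ℝ → ℝ, IsVetoMechanism M q b → IsICVeto v₀ q b →
      vetoPayoff μ u₀ q b ≤ vetoPayoff μ u₀ p a

private lemma integrable_of_bdd (μ : Measure ℝ) [IsProbabilityMeasure μ]
    (hsupp : μ (Icc (0:ℝ) 1) = 1) {f : ℝ → ℝ} (hf : Measurable f) {C : ℝ}
    (hC : ∀ θ ∈ Icc (0:ℝ) 1, |f θ| ≤ C) : Integrable f μ := by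
  have hae : ∀ᵐ θ ∂μ, θ ∈ Icc (0:ℝ) 1 := by
    have hc : μ ((Icc (0:ℝ) 1)ᶜ) = 0 := by
      rw [measure_compl measurableSet_Icc (measure_ne_top μ _), hsupp, measure_univ, tsub_self]
    rw [ae_iff]
    exact hc
  refine (integrable_const C).mono' hf.aestronglyMeasurable ?_
  filter_upwards [hae] with θ hθ
  simpa using hC θ hθ

set_option maxHeartbeats 2000000 in
/-- **The optimal veto mechanism is valuable.** -/
theorem optimal_veto_is_valuable
    (μ : Measure ℝ) [IsProbabilityMeasure μ]
    (hsupp : μ (Icc (0 : ℝ) 1) = 1)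
    (hfull : ∀ a b : ℝ, 0 ≤ a → a < b → b ≤ 1 → 0 < μ (Ioo a b))
    (v₀ u₀ : ℝ) (hv₀ : v₀ ≤ 0) (hu₀ : u₀ < 0)
    (Eμ : ℝ) (hEμ : Eμ = ∫ θ, θ ∂μ)
    (hval : (Eμ - v₀) ^ 2 < (1 - v₀) ^ 2 + u₀)
    (η : ℝ → ℝ) (hη : ∀ θ, η θ = Real.sqrt ((θ - v₀) ^ 2 + u₀) + v₀)
    (s : ℝ) (hs : s = max 0 (Real.sqrt (-u₀) + v₀))
    (abar θbar : ℝ) (hθbar : θbar ∈ Icc s 1) (hηθbar : η θbar = abar)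
    (hFOC : (∫ θ in Icc θbar 1, (η θ - abar) ∂μ) + abar - Eμ = 0)
    (af pf : ℝ → ℝ)
    (haf : ∀ θ, af θ = if θ < θbar then abar else η θ)
    (hpf : ∀ θ, pf θ = if θ < θbar then 0 else (η θ - abar) / (η θ - v₀)) :
    -∫ θ, (Eμ - θ) ^ 2 ∂μ < vetoPayoff μ u₀ pf af := by
  have hae : ∀ᵐ θ ∂μ, θ ∈ Icc (0:ℝ) 1 := by
    have hc : μ ((Icc (0:ℝ) 1)ᶜ) = 0 := by
      rw [measure_compl measurableSet_Icc (measure_ne_top μ _), hsupp, measure_univ, tsub_self]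
    rw [ae_iff]
    exact hc
  -- basic order facts
  have hu₀' : (0:ℝ) ≤ -u₀ := by linarith
  have hsqu : Real.sqrt (-u₀) ^ 2 = -u₀ := Real.sq_sqrt hu₀'
  have hsqupos : 0 < Real.sqrt (-u₀) := Real.sqrt_pos.mpr (by linarith)
  have hsv : Real.sqrt (-u₀) + v₀ ≤ s := by rw [hs]; exact le_max_right _ _
  have hs0 : 0 ≤ s := by rw [hs]; exact le_max_left _ _
  have hsθ : s ≤ θbar := hθbar.1
  have hbar0 : 0 ≤ θbar := le_trans hs0 hsθ
  have hbar1 : θbar ≤ 1 := hθbar.2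
  have hηmeas : Measurable η := by
    have : η = fun θ => Real.sqrt ((θ - v₀) ^ 2 + u₀) + v₀ := funext hη
    rw [this]
    exact ((Real.continuous_sqrt.comp (by continuity)).add continuous_const).measurable
  -- nonnegativity of the radicand above θbar
  have hD : ∀ θ, θbar ≤ θ → 0 ≤ (θ - v₀)^2 + u₀ := by
    intro θ h
    have h1 : Real.sqrt (-u₀) ≤ θ - v₀ := by linarith
    nlinarith
  -- strict monotonicity of η on [s, ∞)
  have hmono : ∀ x y : ℝ, s ≤ x → x < y → η x < η y := by
    intro x y hx hxy
    have hx' : Real.sqrt (-u₀) ≤ x - v₀ := by linarith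
    have hDx : 0 ≤ (x - v₀)^2 + u₀ := by nlinarith
    have hlt : (x - v₀)^2 + u₀ < (y - v₀)^2 + u₀ := by nlinarith
    rw [hη x, hη y]
    have := Real.sqrt_lt_sqrt hDx hlt
    linarith
  -- bound on η on [0,1]
  have hηbd : ∀ θ ∈ Icc (0:ℝ) 1, |η θ| ≤ 1 - v₀ := by
    intro θ hθ
    have h1 : Real.sqrt ((θ - v₀)^2 + u₀) ≤ Real.sqrt ((1 - v₀)^2) := by
      apply Real.sqrt_le_sqrt
      nlinarith [hθ.1, hθ.2]
    have h2 : Real.sqrt ((1 - v₀)^2) = 1 - v₀ := by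
      rw [Real.sqrt_sq (by linarith)]
    have h3 : 0 ≤ Real.sqrt ((θ - v₀)^2 + u₀) := Real.sqrt_nonneg _
    rw [hη θ, abs_le]
    constructor <;> nlinarith
  have habs : |abar| ≤ 1 - v₀ := by
    rw [← hηθbar]
    exact hηbd θbar ⟨hbar0, hbar1⟩
  -- θbar < 1
  have hbarlt : θbar < 1 := by
    rcases lt_or_eq_of_le hbar1 with h | h
    · exact h
    · exfalso
      have hI : ∫ θ in Icc θbar 1, (η θ - abar) ∂μ = 0 := by
        have h0 : ∀ᵐ θ ∂(μ.restrict (Icc θbar 1)), η θ - abar = 0 := by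
          filter_upwards [ae_restrict_mem measurableSet_Icc] with θ hθ
          have : θ = θbar := le_antisymm (h ▸ hθ.2) hθ.1
          rw [this, hηθbar, sub_self]
        calc ∫ θ in Icc θbar 1, (η θ - abar) ∂μ
            = ∫ _ in Icc θbar 1, (0:ℝ) ∂μ := integral_congr_ae h0
          _ = 0 := integral_zero _ _
      have habarEμ : abar = Eμ := by rw [hI] at hFOC; linarith
      have h1 : η 1 = abar := by rw [← h]; exact hηθbar
      rw [hη 1] at h1
      have hnn : 0 ≤ (1 - v₀)^2 + u₀ := le_of_lt (lt_of_le_of_lt (sq_nonneg _) hval)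
      have hsq2 := Real.sq_sqrt hnn
      have h2 : (abar - v₀)^2 = (1 - v₀)^2 + u₀ := by
        have h3 : Real.sqrt ((1 - v₀)^2 + u₀) = abar - v₀ := by linarith
        rw [← hsq2, h3]
      rw [habarEμ] at h2
      linarith
  -- pointwise payoff identity
  have hpt : ∀ θ ∈ Icc (0:ℝ) 1,
      pf θ * u₀ - (1 - pf θ) * (af θ - θ) ^ 2
        = -(θ - abar)^2 + (Icc θbar 1).indicator (fun t => (η t - abar)^2) θ := by
    intro θ hθ
    by_cases hcase : θ < θbar
    · have hnot : θ ∉ Icc θbar 1 := fun hmem => absurd hmem.1 (not_le.mpr hcase)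
      rw [hpf θ, haf θ, if_pos hcase, if_pos hcase, indicator_of_notMem hnot]
      ring
    · push_neg at hcase
      have hmem : θ ∈ Icc θbar 1 := ⟨hcase, hθ.2⟩
      rw [hpf θ, haf θ, if_neg (not_lt.mpr hcase), if_neg (not_lt.mpr hcase),
        indicator_of_mem hmem]
      have hDθ : 0 ≤ (θ - v₀)^2 + u₀ := hD θ hcase
      set y := Real.sqrt ((θ - v₀)^2 + u₀) with hy
      have hy2 : y ^ 2 = (θ - v₀)^2 + u₀ := Real.sq_sqrt hDθ
      have hηθ : η θ = y + v₀ := hη θ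
      rcases eq_or_lt_of_le (Real.sqrt_nonneg ((θ - v₀)^2 + u₀)) with h0 | hypos
      · -- y = 0 : then θ = θbar and abar = v₀
        have hy0 : y = 0 := h0.symm
        have hθv : Real.sqrt (-u₀) ≤ θ - v₀ := by linarith
        have hθv' : (θ - v₀)^2 = -u₀ := by
          have h2 := hy2
          rw [hy0] at h2
          norm_num at h2
          linarith
        have hbv : Real.sqrt (-u₀) ≤ θbar - v₀ := by linarith
        have h3 : (θ - v₀ - Real.sqrt (-u₀)) * (θ - v₀ + Real.sqrt (-u₀)) = 0 := by
          linear_combination hθv' - hsqu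
        have h4 : θ - v₀ = Real.sqrt (-u₀) := by
          rcases mul_eq_zero.mp h3 with h5 | h5
          · linarith
          · linarith
        have hθθbar : θ = θbar := by linarith
        have habar : abar = v₀ := by
          rw [← hηθbar, ← hθθbar, hηθ, hy0, zero_add]
        rw [hηθ, hy0, habar]
        simp only [zero_add, sub_self, zero_div]
        ring
      · have hyne : y ≠ 0 := ne_of_gt hypos
        have hu : u₀ = y^2 - (θ - v₀)^2 := by linarith
        rw [hηθ]
        have hden : y + v₀ - v₀ = y := by ring
        rw [hden, hu]
        field_simp
        ring
  -- integrability
  have hint1 : Integrable (fun θ => (θ - abar)^2) μ := by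
    refine integrable_of_bdd μ hsupp ((measurable_id.sub measurable_const).pow_const 2)
      (C := (1 + |abar|)^2) ?_
    intro θ hθ
    rw [abs_of_nonneg (sq_nonneg _), ← sq_abs]
    refine pow_le_pow_left₀ (abs_nonneg _) ?_ 2
    refine (abs_sub θ abar).trans ?_
    rw [abs_of_nonneg hθ.1]
    linarith [hθ.2]
  have hintE : Integrable (fun θ => (Eμ - θ)^2) μ := by
    refine integrable_of_bdd μ hsupp ((measurable_const.sub measurable_id).pow_const 2)
      (C := (|Eμ| + 1)^2) ?_
    intro θ hθ
    rw [abs_of_nonneg (sq_nonneg _), ← sq_abs]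
    refine pow_le_pow_left₀ (abs_nonneg _) ?_ 2
    refine (abs_sub Eμ θ).trans ?_
    rw [abs_of_nonneg hθ.1]
    linarith [hθ.2]
  have hintθ : Integrable (fun θ : ℝ => θ) μ := by
    refine integrable_of_bdd μ hsupp measurable_id (C := 1) ?_
    intro θ hθ
    rw [abs_of_nonneg hθ.1]; exact hθ.2
  have hintηc : ∀ c : ℝ, Integrable (fun θ => (η θ - c)^2) μ := by
    intro c
    refine integrable_of_bdd μ hsupp ((hηmeas.sub measurable_const).pow_const 2)
      (C := ((1 - v₀) + |c|)^2) ?_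
    intro θ hθ
    rw [abs_of_nonneg (sq_nonneg _), ← sq_abs]
    refine pow_le_pow_left₀ (abs_nonneg _) ?_ 2
    refine (abs_sub (η θ) c).trans ?_
    linarith [hηbd θ hθ]
  have hintη : Integrable (fun θ => η θ - abar) μ := by
    refine integrable_of_bdd μ hsupp (hηmeas.sub measurable_const)
      (C := (1 - v₀) + |abar|) ?_
    intro θ hθ
    refine (abs_sub (η θ) abar).trans ?_
    linarith [hηbd θ hθ]
  have hint2 : Integrable ((Icc θbar 1).indicator (fun t => (η t - abar)^2)) μ :=
    (hintηc abar).indicator measurableSet_Icc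
  -- abbreviations (plain fvars, not let-bindings)
  obtain ⟨J, hJ⟩ : ∃ J, J = ∫ θ in Icc θbar 1, (η θ - abar)^2 ∂μ := ⟨_, rfl⟩
  obtain ⟨I, hI⟩ : ∃ I, I = Eμ - abar := ⟨_, rfl⟩
  obtain ⟨r, hr⟩ : ∃ r, r = (μ (Icc θbar 1)).toReal := ⟨_, rfl⟩
  -- rewrite the payoff
  have hint1' : Integrable (fun θ => -(θ - abar)^2) μ := hint1.neg
  have hvp : vetoPayoff μ u₀ pf af = -(∫ θ, (θ - abar)^2 ∂μ) + J := by
    rw [vetoPayoff]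
    have hcong : (fun θ => pf θ * u₀ - (1 - pf θ) * (af θ - θ) ^ 2)
        =ᵐ[μ] fun θ => -(θ - abar)^2 + (Icc θbar 1).indicator (fun t => (η t - abar)^2) θ := by
      filter_upwards [hae] with θ hθ
      exact hpt θ hθ
    rw [integral_congr_ae hcong, integral_add hint1' hint2, integral_neg,
      integral_indicator measurableSet_Icc, hJ]
  -- mean decomposition
  have hmean : ∫ θ, (θ:ℝ) ∂μ = Eμ := hEμ.symm
  have hsplit : ∫ θ, (θ - abar)^2 ∂μ = (∫ θ, (Eμ - θ)^2 ∂μ) + I^2 := by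
    have heq : (fun θ : ℝ => (θ - abar)^2)
        = fun θ => (Eμ - θ)^2 + ((2*(Eμ - abar)) * θ + (abar^2 - Eμ^2)) := by
      funext θ; ring
    have hA : Integrable (fun θ : ℝ => (2*(Eμ - abar)) * θ) μ := hintθ.const_mul _
    have hB : Integrable (fun _ : ℝ => abar^2 - Eμ^2) μ := integrable_const _
    have hAB : Integrable (fun θ : ℝ => (2*(Eμ - abar)) * θ + (abar^2 - Eμ^2)) μ := hA.add hB
    rw [heq, integral_add hintE hAB, integral_add hA hB, integral_const_mul _ _, hmean,
      integral_const]
    simp only [measure_univ, probReal_univ, ENNReal.toReal_one, smul_eq_mul, one_mul]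
    rw [hI]
    ring
  -- FOC
  have hFOCI : ∫ θ in Icc θbar 1, (η θ - abar) ∂μ = I := by rw [hI]; linarith
  -- measure facts
  have hμpos : 0 < μ (Icc θbar 1) :=
    lt_of_lt_of_le (hfull θbar 1 hbar0 hbarlt le_rfl) (measure_mono Ioo_subset_Icc_self)
  have hrpos : 0 < r := by
    rw [hr]; exact ENNReal.toReal_pos (ne_of_gt hμpos) (measure_ne_top μ _)
  have hrle : r ≤ 1 := by
    have h1 : μ (Icc θbar 1) ≤ 1 := prob_le_one
    have h2 := ENNReal.toReal_mono (by simp : (1:ENNReal) ≠ ⊤) h1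
    rw [hr]; simpa using h2
  -- strict positivity of second moments around any constant
  have hkey : ∀ c : ℝ, 0 < ∫ θ in Icc θbar 1, (η θ - c)^2 ∂μ := by
    intro c
    obtain ⟨t₁, ht₁⟩ : ∃ t, t = θbar + (1 - θbar)/3 := ⟨_, rfl⟩
    obtain ⟨t₂, ht₂⟩ : ∃ t, t = θbar + 2*(1 - θbar)/3 := ⟨_, rfl⟩
    have hst1 : s ≤ t₁ := by rw [ht₁]; linarith
    have hst2 : s ≤ t₂ := by rw [ht₂]; linarith
    have h0t2 : 0 ≤ t₂ := le_trans hs0 hst2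
    have ht2lt1 : t₂ < 1 := by rw [ht₂]; linarith
    have ht12 : t₁ < t₂ := by rw [ht₁, ht₂]; linarith
    have ht1le1 : t₁ ≤ 1 := by rw [ht₁]; linarith
    have hbt1 : θbar < t₁ := by rw [ht₁]; linarith
    have h12 : η t₁ < η t₂ := hmono t₁ t₂ hst1 ht12
    have hgnn : 0 ≤ᵐ[μ.restrict (Icc θbar 1)] fun θ => (η θ - c)^2 :=
      ae_of_all _ (fun θ => sq_nonneg _)
    have hgi : Integrable (fun θ => (η θ - c)^2) (μ.restrict (Icc θbar 1)) :=
      (hintηc c).restrict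
    rw [integral_pos_iff_support_of_nonneg_ae hgnn hgi]
    by_cases hc : c < η t₂
    · have hT : Ioo t₂ 1 ⊆ Function.support fun θ => (η θ - c)^2 := by
        intro θ hθ
        have h1 : η t₂ < η θ := hmono t₂ θ hst2 hθ.1
        simp only [Function.mem_support]
        exact pow_ne_zero _ (sub_ne_zero.mpr (by linarith))
      calc (0:ENNReal) < μ (Ioo t₂ 1) := hfull t₂ 1 h0t2 ht2lt1 le_rfl
        _ = (μ.restrict (Icc θbar 1)) (Ioo t₂ 1) := by
            rw [Measure.restrict_apply measurableSet_Ioo, inter_eq_left.mpr]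
            intro x hx
            exact ⟨by linarith [hx.1, hbt1, ht12], le_of_lt hx.2⟩
        _ ≤ (μ.restrict (Icc θbar 1)) (Function.support fun θ => (η θ - c)^2) :=
            measure_mono hT
    · push_neg at hc
      have hT : Ioo θbar t₁ ⊆ Function.support fun θ => (η θ - c)^2 := by
        intro θ hθ
        have h1 : η θ < η t₁ := hmono θ t₁ (le_trans hsθ (le_of_lt hθ.1)) hθ.2
        simp only [Function.mem_support]
        exact pow_ne_zero _ (sub_ne_zero.mpr (by linarith))
      calc (0:ENNReal) < μ (Ioo θbar t₁) := hfull θbar t₁ hbar0 hbt1 ht1le1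
        _ = (μ.restrict (Icc θbar 1)) (Ioo θbar t₁) := by
            rw [Measure.restrict_apply measurableSet_Ioo, inter_eq_left.mpr]
            intro x hx
            exact ⟨le_of_lt hx.1, by linarith [hx.2]⟩
        _ ≤ (μ.restrict (Icc θbar 1)) (Function.support fun θ => (η θ - c)^2) :=
            measure_mono hT
  -- variance expansion with c = abar + I/r
  have hexp : ∫ θ in Icc θbar 1, (η θ - (abar + I/r))^2 ∂μ = J - I^2/r := by
    have heq : (fun θ => (η θ - (abar + I/r))^2)
        = fun θ => (η θ - abar)^2 + ((-(2*(I/r))) * (η θ - abar) + (I/r)^2) := by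
      funext θ; ring
    have hA : Integrable (fun θ => (-(2*(I/r))) * (η θ - abar)) (μ.restrict (Icc θbar 1)) :=
      hintη.restrict.const_mul _
    have hB : Integrable (fun _ : ℝ => (I/r)^2) (μ.restrict (Icc θbar 1)) :=
      integrable_const _
    have hAB : Integrable (fun θ => (-(2*(I/r))) * (η θ - abar) + (I/r)^2)
        (μ.restrict (Icc θbar 1)) := hA.add hB
    rw [heq, integral_add ((hintηc abar).restrict) hAB, integral_add hA hB,
      integral_const_mul _ _, hFOCI, setIntegral_const, smul_eq_mul, measureReal_def, ← hr, ← hJ]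
    field_simp
    ring
  have hJgt : I^2/r < J := by
    have h := hkey (abar + I/r)
    rw [hexp] at h
    linarith
  have hI2 : I^2 ≤ I^2/r := by
    rw [le_div_iff₀ hrpos]
    nlinarith [sq_nonneg I]
  rw [hvp, hsplit]
  linarith [hJgt, hI2]
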